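/- arXiv:1605.06297 — 2 statements merged into one kernel-verified Lean document; each statement's English description precedes it below -/
import Mathlib

section
/- For every a ∈ ℕ and d ∈ ℤ, the natural (asymptotic) density μ_a(d) of the set {n ∈ ℕ : s₂(n+a) - s₂(n) = d} exists, i.e. the limit lim_{N→∞} (1/N)·#{n < N : s₂(n+a) - s₂(n) = d} exists. -/
open Filter

/-- `s₂ n` is the number of 1's in the binary expansion of `n`. -/
def s2 (n : ℕ) : ℕ := (Nat.digits 2 n).sum

/-- The counting sequence whose limit (if it exists) is the asymptotic density
`μ_a(d)` of `{n : s₂(n+a) - s₂(n) = d}`. -/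
noncomputable def densSeq (a : ℕ) (d : ℤ) (N : ℕ) : ℝ :=
  (((Finset.range N).filter fun n => (s2 (n + a) : ℤ) - s2 n = d).card : ℝ) / N


lemma s2_bit (n b : ℕ) (hb : b < 2) : s2 (2 * n + b) = s2 n + b := by
  rcases Nat.eq_zero_or_pos (2 * n + b) with h | h
  · have hn : n = 0 := by omega
    have hb0 : b = 0 := by omega
    simp [hn, hb0, s2]
  · unfold s2
    rw [Nat.digits_def' (by norm_num : (1:ℕ) < 2) h]
    have e1 : (2*n+b) % 2 = b := by omega
    have e2 : (2*n+b) / 2 = n := by omega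
    simp [List.sum_cons, e1, e2]
    omega

lemma s2_le (n : ℕ) : s2 n ≤ n := by
  induction n using Nat.strong_induction_on with
  | _ n ih =>
    rcases Nat.eq_zero_or_pos n with h | h
    · simp [h, s2]
    · have h2 : n = 2 * (n / 2) + n % 2 := by omega
      rw [h2, s2_bit _ _ (Nat.mod_lt _ (by norm_num))]
      have := ih (n / 2) (by omega)
      omega

lemma s2_split (k q v : ℕ) (hv : v < 2 ^ k) : s2 (q * 2 ^ k + v) = s2 q + s2 v := by
  induction k generalizing v with
  | zero => interval_cases v; simp [s2]
  | succ k ih =>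
    have hv2 : v / 2 < 2 ^ k := by
      have : 2 ^ (k+1) = 2 * 2 ^ k := by ring
      omega
    have hx : q * 2 ^ (k+1) = 2 * (q * 2 ^ k) := by ring
    have h1 : q * 2 ^ (k+1) + v = 2 * (q * 2 ^ k + v / 2) + v % 2 := by omega
    rw [h1, s2_bit _ _ (Nat.mod_lt _ (by norm_num)), ih _ hv2]
    have h2 : v = 2 * (v / 2) + v % 2 := by omega
    conv_rhs => rw [h2, s2_bit _ _ (Nat.mod_lt _ (by norm_num))]
    omega

noncomputable def G (q : ℕ) : ℤ := (s2 (q+1) : ℤ) - s2 q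

lemma G_even (r : ℕ) : G (2 * r) = 1 := by
  unfold G
  have h0 : s2 (2 * r) = s2 r := by
    have := s2_bit r 0 (by norm_num); simpa using this
  have h1 : s2 (2 * r + 1) = s2 r + 1 := s2_bit r 1 (by norm_num)
  rw [h0, h1]; push_cast; ring

lemma G_odd (r : ℕ) : G (2 * r + 1) = G r - 1 := by
  unfold G
  have h1 : s2 (2 * r + 1) = s2 r + 1 := s2_bit r 1 (by norm_num)
  have h2 : s2 (2 * r + 1 + 1) = s2 (r + 1) := by
    have h := s2_bit (r+1) 0 (by norm_num)
    have e : 2 * r + 1 + 1 = 2 * (r + 1) + 0 := by ring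
    rw [e, h]
    simp
  rw [h1, h2]; push_cast; ring

lemma G_le_one (q : ℕ) : G q ≤ 1 := by
  induction q using Nat.strong_induction_on with
  | _ q ih =>
    rcases Nat.even_or_odd q with ⟨r, hr⟩ | ⟨r, hr⟩
    · rw [show q = 2 * r by omega, G_even]
    · rw [show q = 2 * r + 1 by omega, G_odd]
      have := ih r (by omega)
      omega

lemma mod_pow_succ (m r b : ℕ) (hb : b < 2) :
    (2 * r + b) % 2 ^ (m+1) = 2 * (r % 2 ^ m) + b := by
  have h1 : 2 ^ (m+1) = 2 * 2 ^ m := by ring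
  have hd : 2 ^ m * (r / 2 ^ m) + r % 2 ^ m = r := Nat.div_add_mod _ _
  have hA : r % 2 ^ m < 2 ^ m := Nat.mod_lt _ (by positivity)
  have h3 : 2 * r + b = (2 * 2 ^ m) * (r / 2 ^ m) + (2 * (r % 2 ^ m) + b) := by
    calc 2 * r + b = 2 * (2 ^ m * (r / 2 ^ m) + r % 2 ^ m) + b := by rw [hd]
      _ = (2 * 2 ^ m) * (r / 2 ^ m) + (2 * (r % 2 ^ m) + b) := by ring
  rw [h1, h3, Nat.mul_add_mod]
  exact Nat.mod_eq_of_lt (by omega)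

lemma G_mod (m q : ℕ) : G (q % 2 ^ m) = max (G q) (1 - m) := by
  induction m generalizing q with
  | zero =>
    simp only [pow_zero, Nat.mod_one]
    have h0 : G 0 = 1 := by simp [G, s2]
    have := G_le_one q
    rw [h0]; push_cast; omega
  | succ m ih =>
    rcases Nat.even_or_odd q with ⟨r, hr⟩ | ⟨r, hr⟩
    · have hq : q = 2 * r := by omega
      rw [hq, show (2*r % 2^(m+1)) = 2*(r % 2^m) by simpa using mod_pow_succ m r 0 (by norm_num), G_even, G_even]
      push_cast; omega
    · have hq : q = 2 * r + 1 := by omega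
      rw [hq, mod_pow_succ m r 1 (by norm_num), G_odd, G_odd, ih]
      push_cast; omega

lemma periodic (a : ℕ) (d : ℤ) (n : ℕ) :
    ((s2 (n + a) : ℤ) - s2 n = d) ↔
      ((s2 (n % 2 ^ (a + (2 ^ a + d.natAbs + 2)) + a) : ℤ)
        - s2 (n % 2 ^ (a + (2 ^ a + d.natAbs + 2))) = d) := by
  set m := 2 ^ a + d.natAbs + 2 with hm
  set K := a + m with hK
  have ha : a < 2 ^ a := Nat.lt_two_pow_self (n := a)
  set u := n % 2 ^ a with hu
  set q := n / 2 ^ a with hq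
  set u' := n % 2 ^ K with hu'
  have hult : u < 2 ^ a := Nat.mod_lt _ (by positivity)
  have hqm : q % 2 ^ m < 2 ^ m := Nat.mod_lt _ (by positivity)
  have hpow : 2 ^ K = 2 ^ a * 2 ^ m := by rw [hK, pow_add]
  have hu'u : u' % 2 ^ a = u := Nat.mod_mod_of_dvd n (by rw [hpow]; exact Dvd.intro _ rfl)
  have hu'q : u' / 2 ^ a = q % 2 ^ m := by
    rw [hu', hpow]; exact Nat.mod_mul_right_div_self n _ _
  have hdecomp : n = q * 2 ^ a + u := (Nat.div_add_mod' n (2 ^ a)).symm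
  have hu'decomp : u' = (q % 2 ^ m) * 2 ^ a + u := by
    have h1 := Nat.div_add_mod' u' (2 ^ a)
    rw [hu'u, hu'q] at h1; omega
  have A2 : s2 n = s2 q + s2 u := by
    conv_lhs => rw [hdecomp]
    exact s2_split _ _ _ hult
  have B2 : s2 u' = s2 (q % 2 ^ m) + s2 u := by
    conv_lhs => rw [hu'decomp]
    exact s2_split _ _ _ hult
  by_cases hcase : u + a < 2 ^ a
  · have e1 : n + a = q * 2 ^ a + (u + a) := by omega
    have e2 : u' + a = (q % 2 ^ m) * 2 ^ a + (u + a) := by omega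
    have A1 : s2 (n + a) = s2 q + s2 (u + a) := by rw [e1]; exact s2_split _ _ _ hcase
    have B1 : s2 (u' + a) = s2 (q % 2 ^ m) + s2 (u + a) := by
      rw [e2]; exact s2_split _ _ _ hcase
    rw [A1, A2, B1, B2]
    push_cast
    omega
  · set v := u + a - 2 ^ a with hv
    have hvlt : v < 2 ^ a := by omega
    have hmul1 : (q + 1) * 2 ^ a = q * 2 ^ a + 2 ^ a := by ring
    have hmul2 : (q % 2 ^ m + 1) * 2 ^ a = (q % 2 ^ m) * 2 ^ a + 2 ^ a := by ring
    have e1 : n + a = (q + 1) * 2 ^ a + v := by omega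
    have e2 : u' + a = (q % 2 ^ m + 1) * 2 ^ a + v := by omega
    have A1 : s2 (n + a) = s2 (q + 1) + s2 v := by rw [e1]; exact s2_split _ _ _ hvlt
    have B1 : s2 (u' + a) = s2 (q % 2 ^ m + 1) + s2 v := by
      rw [e2]; exact s2_split _ _ _ hvlt
    have hG : G (q % 2 ^ m) = max (G q) (1 - m) := G_mod m q
    have hG1 : G q = (s2 (q + 1) : ℤ) - s2 q := rfl
    have hG2 : G (q % 2 ^ m) = (s2 (q % 2 ^ m + 1) : ℤ) - s2 (q % 2 ^ m) := rfl
    have hXle : G q ≤ 1 := G_le_one q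
    have hsv : s2 v ≤ v := s2_le v
    rw [A1, A2, B1, B2]
    push_cast
    omega

section Count
variable (P : ℕ → Prop) [DecidablePred P] (p : ℕ)

lemma cnt_block (hper : ∀ n, P n ↔ P (n % p)) (Q : ℕ) :
    ((Finset.Ico (p*Q) (p*Q+p)).filter P).card = ((Finset.range p).filter P).card := by
  classical
  apply Finset.card_bij (fun n _ => n - p*Q)
  · intro n hn
    simp only [Finset.mem_filter, Finset.mem_Ico, Finset.mem_range] at hn ⊢
    obtain ⟨⟨h1, h2⟩, h3⟩ := hn
    refine ⟨by omega, ?_⟩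
    have e : n = p * Q + (n - p*Q) := by omega
    have e2 : n % p = (n - p*Q) % p := by conv_lhs => rw [e, Nat.mul_add_mod]
    have e3 : (n - p*Q) % p = n - p*Q := Nat.mod_eq_of_lt (by omega)
    have := (hper n).mp h3
    rw [e2, e3] at this
    exact this
  · intro x hx y hy h
    simp only [Finset.mem_filter, Finset.mem_Ico] at hx hy
    omega
  · intro r hr
    simp only [Finset.mem_filter, Finset.mem_Ico, Finset.mem_range] at hr ⊢
    obtain ⟨h1, h2⟩ := hr
    refine ⟨p*Q + r, ⟨⟨by omega, by omega⟩, ?_⟩, by omega⟩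
    have e2 : (p*Q + r) % p = r := by rw [Nat.mul_add_mod]; exact Nat.mod_eq_of_lt h1
    rw [hper (p*Q+r), e2]
    exact h2

lemma cnt_mul (hper : ∀ n, P n ↔ P (n % p)) (Q : ℕ) :
    ((Finset.range (p*Q)).filter P).card = ((Finset.range p).filter P).card * Q := by
  classical
  induction Q with
  | zero => simp
  | succ Q ih =>
    have hsplit : Finset.range (p*(Q+1)) = Finset.range (p*Q) ∪ Finset.Ico (p*Q) (p*Q+p) := by
      simp only [Finset.range_eq_Ico]
      rw [Finset.Ico_union_Ico_eq_Ico (by omega) (by omega)]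
      congr 1
    have hdis : Disjoint (Finset.filter P (Finset.range (p*Q)))
        (Finset.filter P (Finset.Ico (p*Q) (p*Q+p))) :=
      Finset.disjoint_filter_filter
        (by rw [Finset.range_eq_Ico]; exact Finset.Ico_disjoint_Ico_consecutive 0 _ _)
    rw [hsplit, Finset.filter_union, Finset.card_union_of_disjoint hdis, ih,
      cnt_block P p hper]
    ring

lemma cnt_eq (_hp : 0 < p) (hper : ∀ n, P n ↔ P (n % p)) (N : ℕ) :
    ∃ E ≤ N % p, ((Finset.range N).filter P).card
      = ((Finset.range p).filter P).card * (N / p) + E := by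
  classical
  have hsplit : Finset.range N = Finset.range (p*(N/p)) ∪ Finset.Ico (p*(N/p)) N := by
    simp only [Finset.range_eq_Ico]
    rw [Finset.Ico_union_Ico_eq_Ico (by omega) (Nat.mul_div_le N p)]
  refine ⟨((Finset.Ico (p*(N/p)) N).filter P).card, ?_, ?_⟩
  · calc ((Finset.Ico (p*(N/p)) N).filter P).card ≤ (Finset.Ico (p*(N/p)) N).card :=
        Finset.card_filter_le _ _
      _ = N - p*(N/p) := Nat.card_Ico _ _
      _ ≤ N % p := by have := Nat.div_add_mod N p; omega
  · have hdis : Disjoint (Finset.filter P (Finset.range (p*(N/p))))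
        (Finset.filter P (Finset.Ico (p*(N/p)) N)) :=
      Finset.disjoint_filter_filter
        (by rw [Finset.range_eq_Ico]; exact Finset.Ico_disjoint_Ico_consecutive 0 _ _)
    rw [hsplit, Finset.filter_union, Finset.card_union_of_disjoint hdis, cnt_mul P p hper]

lemma cnt_tendsto (hp : 0 < p) (hper : ∀ n, P n ↔ P (n % p)) :
    Tendsto (fun N : ℕ => (((Finset.range N).filter P).card : ℝ) / N) atTop
      (nhds ((((Finset.range p).filter P).card : ℝ) / p)) := by
  classical
  set c := ((Finset.range p).filter P).card with hc
  set L : ℝ := (c : ℝ) / p with hL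
  have hpne : (p:ℝ) ≠ 0 := Nat.cast_ne_zero.mpr hp.ne'
  have key : ∀ N : ℕ, 1 ≤ N →
      |(((Finset.range N).filter P).card : ℝ) / N - L| ≤ ((c:ℝ)+p)/N := by
    intro N hN
    obtain ⟨E, hE, hcnt⟩ := cnt_eq P p hp hper N
    have hNne : (N:ℝ) ≠ 0 := by positivity
    have hNp : p * (N/p) + N % p = N := Nat.div_add_mod N p
    have hmodlt : N % p < p := Nat.mod_lt _ hp
    have hcnt' : ((((Finset.range N).filter P).card : ℝ)) = (c:ℝ) * (N/p : ℕ) + E := by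
      rw [hcnt]; push_cast; ring
    have hNp' : (p:ℝ) * ((N/p : ℕ):ℝ) + ((N % p : ℕ):ℝ) = (N:ℝ) := by
      exact_mod_cast congrArg (Nat.cast : ℕ → ℝ) hNp
    have h1 : (((Finset.range N).filter P).card : ℝ) / N - L
        = ((E:ℝ)*p - (c:ℝ)*((N % p : ℕ):ℝ))/(N*p) := by
      rw [hL, div_sub_div _ _ hNne hpne]
      congr 1
      have hNval : (N:ℝ) = (p:ℝ) * ((N/p : ℕ):ℝ) + ((N % p : ℕ):ℝ) := hNp'.symm
      rw [hcnt', hNval]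
      ring
    rw [h1, abs_div, abs_of_pos (by positivity : (0:ℝ) < (N:ℝ)*p)]
    have h2 : |(E:ℝ)*p - (c:ℝ)*((N % p : ℕ):ℝ)| ≤ ((c:ℝ)+p)*p := by
      rw [abs_le]
      have hE' : (E:ℝ) ≤ p := by
        have : E ≤ p := by omega
        exact_mod_cast this
      have hm' : ((N % p : ℕ):ℝ) ≤ p := by exact_mod_cast hmodlt.le
      have hc0 : (0:ℝ) ≤ c := Nat.cast_nonneg _
      have hp0 : (0:ℝ) ≤ p := by positivity
      have hE0 : (0:ℝ) ≤ E := by positivity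
      have hm0 : (0:ℝ) ≤ ((N % p : ℕ):ℝ) := by positivity
      constructor <;> nlinarith
    calc |(E:ℝ)*p - (c:ℝ)*((N % p : ℕ):ℝ)|/((N:ℝ)*p) ≤ (((c:ℝ)+p)*p)/((N:ℝ)*p) := by
          apply div_le_div_of_nonneg_right h2 (by positivity) |>.trans_eq rfl
      _ = ((c:ℝ)+p)/N := mul_div_mul_right _ _ hpne
  have h0 : Tendsto (fun N : ℕ => ((c:ℝ)+p)/N) atTop (nhds 0) :=
    tendsto_const_div_atTop_nhds_zero_nat _
  have hsq : Tendsto (fun N : ℕ =>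
      (((Finset.range N).filter P).card : ℝ) / N - L) atTop (nhds 0) := by
    apply squeeze_zero_norm' _ h0
    filter_upwards [eventually_ge_atTop 1] with N hN
    simpa using key N hN
  have := hsq.add_const L
  simpa using this
end Count

theorem density_exists (a : ℕ) (d : ℤ) :
    ∃ L : ℝ, Tendsto (densSeq a d) atTop (nhds L) := by
  classical
  set p := 2 ^ (a + (2 ^ a + d.natAbs + 2)) with hpdef
  have hp : 0 < p := by positivity
  have hper : ∀ n, ((s2 (n + a) : ℤ) - s2 n = d) ↔
      ((s2 (n % p + a) : ℤ) - s2 (n % p) = d) := fun n => periodic a d n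
  have h := cnt_tendsto (fun n => (s2 (n + a) : ℤ) - s2 n = d) p hp hper
  exact ⟨_, h⟩
end

section
/- Let a ∈ ℕ have binary expansion a = ∑_{k=0}^{n} a_k 2^k with a_n the leading digit, and set b_j = (-1)^{a_j+1}. Then the variance of μ_a equals (n+3)/2 - 1/2^{n+1} - (1/2)∑_{i=1}^{n}∑_{k=0}^{n-i} b_{k+i}b_k/2^{i} + ∑_{k=0}^{n} (b_k + b_{n-k})/2^{k+1}. -/
open Filter Finset

lemma s2_two_mul (m : ℕ) : s2 (2 * m) = s2 m := by
  rcases Nat.eq_zero_or_pos m with h | h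
  · simp [h, s2]
  · unfold s2
    rw [Nat.digits_def' (by norm_num) (by omega)]
    simp [Nat.mul_div_cancel_left, Nat.mul_mod_right]

lemma s2_two_mul_add_one (m : ℕ) : s2 (2 * m + 1) = s2 m + 1 := by
  unfold s2
  rw [Nat.digits_def' (by norm_num) (by omega)]
  simp [Nat.mul_add_mod, Nat.mul_add_div]
  omega

def cnt (a : ℕ) (d : ℤ) (N : ℕ) : ℕ :=
  (((Finset.range N).filter fun n => (s2 (n + a) : ℤ) - s2 n = d)).card

lemma cnt_succ (a : ℕ) (d : ℤ) (N : ℕ) :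
    cnt a d (N + 1) = cnt a d N + (if (s2 (N + a) : ℤ) - s2 N = d then 1 else 0) := by
  unfold cnt
  rw [Finset.range_add_one, Finset.filter_insert]
  split
  · rw [Finset.card_insert_of_notMem (by simp)]
  · simp

lemma cnt_even (a : ℕ) (d : ℤ) (N : ℕ) :
    cnt (2 * a) d N = cnt a d ((N + 1) / 2) + cnt a d (N / 2) := by
  induction N with
  | zero => simp [cnt]
  | succ N ih =>
    rw [cnt_succ]
    rcases Nat.even_or_odd N with ⟨m, hm⟩ | ⟨m, hm⟩
    · rw [show m + m = 2 * m from (two_mul m).symm] at hm; subst hm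
      rw [show (2*m+1)/2 = m from by omega, show (2*m)/2 = m from by omega] at ih
      rw [show (2*m+1+1)/2 = m+1 from by omega, show (2*m+1)/2 = m from by omega,
        ih, show 2*m + 2*a = 2*(m+a) from by ring, s2_two_mul, s2_two_mul, cnt_succ a d m]
      omega
    · subst hm
      rw [show (2*m+1+1)/2 = m+1 from by omega, show (2*m+1)/2 = m from by omega] at ih
      rw [show (2*m+1+1+1)/2 = m+1 from by omega, show (2*m+1+1)/2 = m+1 from by omega,
        ih, show 2*m+1 + 2*a = 2*(m+a)+1 from by ring, s2_two_mul_add_one,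
        s2_two_mul_add_one, cnt_succ a d m]
      simp only [Nat.cast_add, Nat.cast_one]
      split <;> split <;> omega

lemma cnt_odd (a : ℕ) (d : ℤ) (N : ℕ) :
    cnt (2 * a + 1) d N = cnt a (d - 1) ((N + 1) / 2) + cnt (a + 1) (d + 1) (N / 2) := by
  induction N with
  | zero => simp [cnt]
  | succ N ih =>
    rw [cnt_succ]
    rcases Nat.even_or_odd N with ⟨m, hm⟩ | ⟨m, hm⟩
    · rw [show m + m = 2 * m from (two_mul m).symm] at hm; subst hm
      rw [show (2*m+1)/2 = m from by omega, show (2*m)/2 = m from by omega] at ih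
      rw [show (2*m+1+1)/2 = m+1 from by omega, show (2*m+1)/2 = m from by omega,
        ih, show 2*m + (2*a+1) = 2*(m+a)+1 from by ring, s2_two_mul_add_one, s2_two_mul,
        cnt_succ a (d-1) m]
      simp only [Nat.cast_add, Nat.cast_one]
      split <;> split <;> omega
    · subst hm
      rw [show (2*m+1+1)/2 = m+1 from by omega, show (2*m+1)/2 = m from by omega] at ih
      rw [show (2*m+1+1+1)/2 = m+1 from by omega, show (2*m+1+1)/2 = m+1 from by omega,
        ih, show 2*m+1 + (2*a+1) = 2*(m+(a+1)) from by ring, s2_two_mul, s2_two_mul_add_one,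
        cnt_succ (a+1) (d+1) m]
      simp only [Nat.cast_add, Nat.cast_one]
      split <;> split <;> omega



lemma densSeq_eq (a : ℕ) (d : ℤ) (N : ℕ) : densSeq a d N = (cnt a d N : ℝ) / N := rfl

lemma half_tendsto (f : ℕ → ℕ) (h : ∀ N, 2 * f N ≤ N + 1 ∧ N ≤ 2 * f N + 1) :
    Tendsto (fun N => ((f N : ℝ)) / N) atTop (nhds (1 / 2)) := by
  have key : Tendsto (fun N : ℕ => ((f N : ℝ)) / N - 1 / 2) atTop (nhds 0) := by
    refine squeeze_zero_norm' ?_ tendsto_one_div_atTop_nhds_zero_nat (a := fun N : ℕ => 1 / (N : ℝ))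
    filter_upwards [eventually_ge_atTop 1] with N hN
    have hN0 : (0:ℝ) < N := by exact_mod_cast hN
    have e : (f N : ℝ) / N - 1 / 2 = (2 * (f N : ℝ) - N) / (2 * N) := by
      field_simp
    rw [e, Real.norm_eq_abs, abs_div]
    have h1 : |2 * (f N : ℝ) - N| ≤ 1 := by
      have h2 := (h N).1
      have h3 := (h N).2
      have h2' : (2 * (f N) : ℝ) ≤ (N : ℝ) + 1 := by exact_mod_cast h2
      have h3' : (N : ℝ) ≤ 2 * (f N) + 1 := by exact_mod_cast h3
      rw [abs_le]; push_cast at h2' h3' ⊢; constructor <;> linarith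
    have h4 : |2 * (N:ℝ)| = 2 * N := abs_of_nonneg (by positivity)
    rw [h4]
    rw [div_le_div_iff₀ (by positivity) hN0]
    nlinarith [abs_nonneg (2 * (f N : ℝ) - N)]
  have := key.add_const (1 / 2)
  simpa using this

lemma tendsto_halfceil : Tendsto (fun N : ℕ => (((N + 1) / 2 : ℕ) : ℝ) / N) atTop (nhds (1/2)) :=
  half_tendsto _ (fun N => by omega)

lemma tendsto_halffloor : Tendsto (fun N : ℕ => ((N / 2 : ℕ) : ℝ) / N) atTop (nhds (1/2)) :=
  half_tendsto _ (fun N => by omega)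

lemma atTop_halfceil : Tendsto (fun N : ℕ => (N + 1) / 2) atTop atTop :=
  tendsto_atTop_atTop.mpr fun b => ⟨2 * b, fun N hN => by omega⟩

lemma atTop_halffloor : Tendsto (fun N : ℕ => N / 2) atTop atTop :=
  tendsto_atTop_atTop.mpr fun b => ⟨2 * b, fun N hN => by omega⟩

lemma cnt_div (a : ℕ) (d : ℤ) (M : ℕ) (N : ℕ) :
    (cnt a d M : ℝ) / N = ((M : ℝ) / N) * densSeq a d M := by
  rcases Nat.eq_zero_or_pos M with h | h
  · simp [h, cnt]
  · rw [densSeq_eq]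
    have : (M : ℝ) ≠ 0 := by positivity
    rw [div_mul_div_comm, mul_comm (N:ℝ) (M:ℝ), mul_div_mul_left _ _ this]

lemma tendsto_even {a : ℕ} {d : ℤ} {L : ℝ} (h : Tendsto (densSeq a d) atTop (nhds L)) :
    Tendsto (densSeq (2 * a) d) atTop (nhds L) := by
  have key : ∀ N, densSeq (2 * a) d N =
      (((N + 1) / 2 : ℕ) : ℝ) / N * densSeq a d ((N + 1) / 2)
        + ((N / 2 : ℕ) : ℝ) / N * densSeq a d (N / 2) := by
    intro N
    rw [densSeq_eq, cnt_even, Nat.cast_add, add_div, cnt_div, cnt_div]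
  have t1 := tendsto_halfceil.mul (h.comp atTop_halfceil)
  have t2 := tendsto_halffloor.mul (h.comp atTop_halffloor)
  have t := t1.add t2
  have heq : (1:ℝ)/2 * L + 1/2 * L = L := by ring
  rw [heq] at t
  exact Tendsto.congr (fun N => (key N).symm) t

lemma tendsto_odd {a : ℕ} {d : ℤ} {L1 L2 : ℝ}
    (h1 : Tendsto (densSeq a (d - 1)) atTop (nhds L1))
    (h2 : Tendsto (densSeq (a + 1) (d + 1)) atTop (nhds L2)) :
    Tendsto (densSeq (2 * a + 1) d) atTop (nhds ((L1 + L2) / 2)) := by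
  have key : ∀ N, densSeq (2 * a + 1) d N =
      (((N + 1) / 2 : ℕ) : ℝ) / N * densSeq a (d - 1) ((N + 1) / 2)
        + ((N / 2 : ℕ) : ℝ) / N * densSeq (a + 1) (d + 1) (N / 2) := by
    intro N
    rw [densSeq_eq, cnt_odd, Nat.cast_add, add_div, cnt_div, cnt_div]
  have t1 := tendsto_halfceil.mul (h1.comp atTop_halfceil)
  have t2 := tendsto_halffloor.mul (h2.comp atTop_halffloor)
  have t := t1.add t2
  have heq : (1:ℝ)/2 * L1 + 1/2 * L2 = (L1 + L2) / 2 := by ring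
  rw [heq] at t
  exact Tendsto.congr (fun N => (key N).symm) t

lemma tendsto_zero (d : ℤ) :
    Tendsto (densSeq 0 d) atTop (nhds (if d = 0 then 1 else 0)) := by
  have key : ∀ N ≥ 1, densSeq 0 d N = if d = 0 then 1 else 0 := by
    intro N hN
    have hc : cnt 0 d N = if d = 0 then N else 0 := by
      unfold cnt
      rcases eq_or_ne d 0 with h | h
      · rw [if_pos h]
        rw [Finset.filter_true_of_mem (fun n _ => by simp [h]), Finset.card_range]
      · rw [if_neg h]
        rw [Finset.filter_false_of_mem (fun n _ => by simp [h, sub_eq_iff_eq_add]; omega),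
          Finset.card_empty]
    rw [densSeq_eq, hc]
    have hN0 : (N : ℝ) ≠ 0 := by positivity
    split <;> simp [hN0, div_self]
  refine Tendsto.congr' ?_ tendsto_const_nhds
  filter_upwards [eventually_ge_atTop 1] with N hN
  exact (key N hN).symm

lemma densSeq_nonneg (a : ℕ) (d : ℤ) (N : ℕ) : 0 ≤ densSeq a d N := by
  unfold densSeq; positivity

lemma densSeq_le_one (a : ℕ) (d : ℤ) (N : ℕ) : densSeq a d N ≤ 1 := by
  unfold densSeq
  rcases Nat.eq_zero_or_pos N with h | h
  · simp [h]
  · rw [div_le_one (by exact_mod_cast h)]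
    exact_mod_cast (Finset.card_filter_le _ _).trans_eq (Finset.card_range N)


lemma geo0 : HasSum (fun j : ℕ => ((1:ℝ)/2)^j) 2 := by
  have := hasSum_geometric_of_lt_one (r := (1:ℝ)/2) (by norm_num) (by norm_num)
  norm_num at this
  exact this

lemma geo1 : HasSum (fun j : ℕ => (j : ℝ) * ((1:ℝ)/2)^j) 2 := by
  have := hasSum_coe_mul_geometric_of_norm_lt_one (r := (1:ℝ)/2) (by norm_num)
  norm_num at this
  exact this

lemma geo2 : HasSum (fun j : ℕ => (j : ℝ)^2 * ((1:ℝ)/2)^j) 6 := by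
  have hs : Summable (fun j : ℕ => (j:ℝ)^2 * ((1:ℝ)/2)^j) := by
    exact_mod_cast summable_pow_mul_geometric_of_norm_lt_one (R := ℝ) 2
      (r := (1:ℝ)/2) (by norm_num)
  have hT : ∑' j : ℕ, (j:ℝ)^2 * ((1:ℝ)/2)^j = 6 := by
    have h0 := hs.tsum_eq_zero_add
    have hexp : (fun j : ℕ => ((j:ℕ)+1:ℝ)^2 * ((1:ℝ)/2)^(j+1)) =
        (fun j : ℕ => (1/2) * ((j:ℝ)^2 * ((1:ℝ)/2)^j) + ((j:ℝ) * ((1:ℝ)/2)^j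
          + (1/2) * ((1:ℝ)/2)^j)) := by
      funext j; push_cast; ring
    rw [show ((0:ℕ):ℝ)^2 * ((1:ℝ)/2)^(0:ℕ) = 0 by norm_num, zero_add] at h0
    have h1 : ∑' j : ℕ, ((j:ℕ)+1:ℝ)^2 * ((1:ℝ)/2)^(j+1)
        = (1/2) * (∑' j : ℕ, (j:ℝ)^2 * ((1:ℝ)/2)^j) + (2 + 1) := by
      rw [hexp]
      rw [Summable.tsum_add (hs.mul_left _) ((geo1.summable).add (geo0.summable.mul_left _))]
      rw [tsum_mul_left, Summable.tsum_add geo1.summable (geo0.summable.mul_left _), tsum_mul_left]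
      rw [geo1.tsum_eq, geo0.tsum_eq]
      norm_num
    push_cast at h0 h1
    rw [h1] at h0
    linarith
  have := hs.hasSum
  rwa [hT] at this

section Mu
variable {μ : ℕ → ℤ → ℝ} (hμ : ∀ a d, Tendsto (densSeq a d) atTop (nhds (μ a d)))

include hμ

lemma mu_zero (d : ℤ) : μ 0 d = if d = 0 then 1 else 0 :=
  tendsto_nhds_unique (hμ 0 d) (tendsto_zero d)

lemma mu_even (a : ℕ) (d : ℤ) : μ (2 * a) d = μ a d :=
  tendsto_nhds_unique (hμ (2 * a) d) (tendsto_even (hμ a d))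

lemma mu_odd (a : ℕ) (d : ℤ) : μ (2 * a + 1) d = (μ a (d - 1) + μ (a + 1) (d + 1)) / 2 :=
  tendsto_nhds_unique (hμ (2 * a + 1) d) (tendsto_odd (hμ a (d - 1)) (hμ (a + 1) (d + 1)))

lemma mu_nonneg (a : ℕ) (d : ℤ) : 0 ≤ μ a d :=
  ge_of_tendsto' (hμ a d) (densSeq_nonneg a d)

lemma mu_le_one (a : ℕ) (d : ℤ) : μ a d ≤ 1 :=
  le_of_tendsto' (hμ a d) (densSeq_le_one a d)


lemma mu_one_rec (d : ℤ) : μ 1 d = (μ 0 (d - 1) + μ 1 (d + 1)) / 2 := by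
  have := mu_odd hμ 0 d
  simpa using this

lemma mu_one_ge (d : ℤ) (hd : 2 ≤ d) : μ 1 d = 0 := by
  have step : ∀ e : ℤ, 2 ≤ e → μ 1 e = μ 1 (e + 1) / 2 := by
    intro e he
    rw [mu_one_rec hμ e, mu_zero hμ, if_neg (by omega)]
    ring
  have iter : ∀ j : ℕ, μ 1 d = (1/2)^j * μ 1 (d + j) := by
    intro j
    induction j with
    | zero => simp
    | succ j ih =>
      have harg : (d + ((j:ℕ)+1:ℤ)) = (d + j) + 1 := by push_cast; ring
      rw [ih, step (d + j) (by omega)]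
      push_cast [harg]
      ring
  have hb : ∀ j : ℕ, μ 1 d ≤ ((1:ℝ)/2)^j := by
    intro j
    rw [iter j]
    have h1 := mu_le_one hμ 1 (d + j)
    have h0 := mu_nonneg hμ 1 (d + j)
    nlinarith [pow_pos (by norm_num : (0:ℝ) < 1/2) j]
  have h0 := mu_nonneg hμ 1 d
  have hlim : Tendsto (fun j : ℕ => ((1:ℝ)/2)^j) atTop (nhds 0) :=
    tendsto_pow_atTop_nhds_zero_of_lt_one (by norm_num) (by norm_num)
  have hle : μ 1 d ≤ 0 := ge_of_tendsto' hlim hb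
  linarith

lemma mu_one_down : ∀ j : ℕ, μ 1 (1 - (j:ℤ)) = ((1:ℝ)/2)^(j+1) := by
  intro j
  induction j with
  | zero =>
    have := mu_one_rec hμ 1
    rw [mu_zero hμ, if_pos (by norm_num), show (1:ℤ)+1 = 2 from by norm_num,
      mu_one_ge hμ 2 le_rfl] at this
    norm_num at this ⊢
    linarith
  | succ j ih =>
    have harg : (1 - ((j:ℕ)+1:ℤ)) = (1 - j) - 1 := by push_cast; ring
    have hr := mu_one_rec hμ ((1 - (j:ℤ)) - 1)
    rw [mu_zero hμ, if_neg (by omega), sub_add_cancel, ih] at hr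
    push_cast [harg]
    rw [hr]
    ring

lemma hasSum_mu_one (g : ℤ → ℝ) (s : ℝ)
    (h : HasSum (fun j : ℕ => g (1 - (j:ℤ)) * ((1:ℝ)/2)^(j+1)) s) :
    HasSum (fun d : ℤ => g d * μ 1 d) s := by
  have einj : Function.Injective (fun j : ℕ => 1 - (j:ℤ)) := by
    intro i j hij
    simp only at hij
    omega
  have h0 : ∀ d : ℤ, d ∉ Set.range (fun j : ℕ => 1 - (j:ℤ)) → g d * μ 1 d = 0 := by
    intro d hd
    have hd2 : 2 ≤ d := by
      by_contra hlt
      push_neg at hlt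
      exact hd ⟨(1 - d).toNat, by show 1 - ((1 - d).toNat : ℤ) = d; omega⟩
    rw [mu_one_ge hμ d hd2, mul_zero]
  refine (Function.Injective.hasSum_iff einj h0).mp ?_
  have hc : (fun j : ℕ => (fun d : ℤ => g d * μ 1 d) ((fun j : ℕ => 1 - (j:ℤ)) j))
      = fun j : ℕ => g (1 - (j:ℤ)) * ((1:ℝ)/2)^(j+1) := by
    funext j
    simp only
    rw [mu_one_down hμ j]
  show HasSum ((fun d : ℤ => g d * μ 1 d) ∘ (fun j : ℕ => 1 - (j:ℤ))) s
  rw [Function.comp_def, hc]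
  exact h

lemma mu_one_mass : HasSum (fun d : ℤ => μ 1 d) 1 := by
  have h := hasSum_mu_one hμ (fun _ => 1) 1 ?_
  · simpa using h
  · have := geo0.mul_left (1/2)
    have hc : (fun j : ℕ => (1:ℝ)/2 * ((1:ℝ)/2)^j) = fun j : ℕ => (1:ℝ) * ((1:ℝ)/2)^(j+1) := by
      funext j; ring
    rw [hc] at this
    rw [show (1:ℝ)/2 * 2 = 1 by norm_num] at this
    exact this

lemma mu_one_mean : HasSum (fun d : ℤ => (d:ℝ) * μ 1 d) 0 := by
  refine hasSum_mu_one hμ (fun d => (d:ℝ)) 0 ?_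
  have h := (geo0.mul_left (1/2)).sub (geo1.mul_left (1/2))
  have hc : (fun j : ℕ => (1:ℝ)/2 * ((1:ℝ)/2)^j - 1/2 * ((j:ℝ) * ((1:ℝ)/2)^j))
      = fun j : ℕ => ((1 - (j:ℤ) : ℤ) : ℝ) * ((1:ℝ)/2)^(j+1) := by
    funext j; push_cast; ring
  rw [hc] at h
  rw [show (1:ℝ)/2 * 2 - 1/2 * 2 = 0 by norm_num] at h
  exact h

lemma mu_one_var : HasSum (fun d : ℤ => (d:ℝ)^2 * μ 1 d) 2 := by
  refine hasSum_mu_one hμ (fun d => (d:ℝ)^2) 2 ?_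
  have h := ((geo2.mul_left (1/2)).sub geo1).add (geo0.mul_left (1/2))
  have hc : (fun j : ℕ => (1:ℝ)/2 * ((j:ℝ)^2 * ((1:ℝ)/2)^j) - (j:ℝ) * ((1:ℝ)/2)^j
        + 1/2 * ((1:ℝ)/2)^j)
      = fun j : ℕ => ((1 - (j:ℤ) : ℤ) : ℝ)^2 * ((1:ℝ)/2)^(j+1) := by
    funext j; push_cast; ring
  rw [hc] at h
  rw [show (1:ℝ)/2 * 6 - 2 + 1/2 * 2 = 2 by norm_num] at h
  exact h


end Mu


noncomputable def V : ℕ → ℝ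
  | 0 => 0
  | 1 => 2
  | (a+2) => if h : (a+2) % 2 = 0 then V ((a+2)/2)
             else (V ((a+2)/2) + V ((a+2)/2 + 1)) / 2 + 1
decreasing_by all_goals omega

lemma V_zero : V 0 = 0 := by simp [V]
lemma V_one : V 1 = 2 := by simp [V]

lemma V_even (b : ℕ) : V (2 * b) = V b := by
  rcases b with _ | b
  · norm_num
  · show V (2*b+1+1) = V (b+1)
    rw [show 2*b+1+1 = (2*b)+2 from by ring]
    rw [V]
    rw [dif_pos (by omega), show (2*b+2)/2 = b+1 from by omega]

lemma V_odd (b : ℕ) : V (2 * b + 1) = (V b + V (b + 1)) / 2 + 1 := by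
  rcases b with _ | b
  · norm_num [V_zero, V_one]
  · rw [show 2*(b+1)+1 = (2*b+1)+2 from by ring, V]
    rw [dif_neg (by omega), show ((2*b+1)+2)/2 = b+1 from by omega]

lemma hasSum_comp_sub (f : ℤ → ℝ) (c : ℤ) (s : ℝ) (h : HasSum f s) :
    HasSum (fun d => f (d - c)) s := by
  refine ((Equiv.addRight c).hasSum_iff (f := fun d => f (d - c)) (a := s)).mp ?_
  have : ((fun d => f (d - c)) ∘ (Equiv.addRight c)) = f := by
    funext e
    simp [Equiv.addRight]
  rw [this]
  exact h


lemma HasSum.congr_fn {f g : ℤ → ℝ} {s : ℝ} (h : HasSum f s) (he : ∀ d, f d = g d) :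
    HasSum g s := (funext he : f = g) ▸ h

section Mu2
variable {μ : ℕ → ℤ → ℝ} (hμ : ∀ a d, Tendsto (densSeq a d) atTop (nhds (μ a d)))
include hμ

lemma moments : ∀ a : ℕ, HasSum (fun d : ℤ => μ a d) 1 ∧
    HasSum (fun d : ℤ => (d:ℝ) * μ a d) 0 ∧
    HasSum (fun d : ℤ => (d:ℝ)^2 * μ a d) (V a) := by
  intro a
  induction a using Nat.strong_induction_on with
  | _ a ih =>
  rcases Nat.lt_or_ge a 2 with h2 | h2
  · interval_cases a
    · refine ⟨?_, ?_, ?_⟩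
      · have h : (fun d : ℤ => μ 0 d) = fun d : ℤ => if d = 0 then (1:ℝ) else 0 :=
          funext fun d => mu_zero hμ d
        rw [h]
        exact hasSum_ite_eq 0 1
      · have h : (fun d : ℤ => (d:ℝ) * μ 0 d) = fun d : ℤ => (0:ℝ) := by
          funext d
          rw [mu_zero hμ d]
          split <;> simp_all
        rw [h]
        simpa using hasSum_zero
      · have h : (fun d : ℤ => (d:ℝ)^2 * μ 0 d) = fun d : ℤ => (0:ℝ) := by
          funext d
          rw [mu_zero hμ d]
          split <;> simp_all
        rw [h, V_zero]
        simpa using hasSum_zero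
    · exact ⟨mu_one_mass hμ, mu_one_mean hμ, by rw [V_one]; exact mu_one_var hμ⟩
  · rcases Nat.even_or_odd a with ⟨b, hb⟩ | ⟨b, hb⟩
    · have hb2 : a = 2 * b := by omega
      subst hb2
      obtain ⟨m0, m1, m2⟩ := ih b (by omega)
      have he : ∀ d, μ (2 * b) d = μ b d := fun d => mu_even hμ b d
      refine ⟨?_, ?_, ?_⟩
      · simpa only [he] using m0
      · simpa only [he] using m1
      · rw [V_even]
        simpa only [he] using m2
    · have hb2 : a = 2 * b + 1 := by omega
      subst hb2
      obtain ⟨m0, m1, m2⟩ := ih b (by omega)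
      obtain ⟨n0, n1, n2⟩ := ih (b+1) (by omega)
      have he : ∀ d, μ (2 * b + 1) d = (μ b (d - 1) + μ (b+1) (d + 1)) / 2 := fun d =>
        mu_odd hμ b d
      have sb0 : HasSum (fun d : ℤ => μ b (d - 1)) 1 := hasSum_comp_sub _ 1 _ m0
      have sb1 : HasSum (fun d : ℤ => (d:ℝ) * μ b (d - 1)) 1 := by
        have g1 : HasSum (fun d : ℤ => ((d:ℝ) + 1) * μ b d) 1 := by
          have h := m1.add m0
          rw [zero_add] at h
          exact h.congr_fn (fun d => by ring)
        exact (hasSum_comp_sub _ 1 _ g1).congr_fn (fun d => by push_cast; ring)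
      have sb2 : HasSum (fun d : ℤ => (d:ℝ)^2 * μ b (d - 1)) (V b + 1) := by
        have g2 : HasSum (fun d : ℤ => ((d:ℝ) + 1)^2 * μ b d) (V b + 1) := by
          have h := (m2.add (m1.mul_left 2)).add m0
          rw [show V b + 2 * (0:ℝ) + 1 = V b + 1 from by ring] at h
          exact h.congr_fn (fun d => by ring)
        exact (hasSum_comp_sub _ 1 _ g2).congr_fn (fun d => by push_cast; ring)
      have t0 : HasSum (fun d : ℤ => μ (b+1) (d + 1)) 1 :=
        (hasSum_comp_sub _ (-1) _ n0).congr_fn (fun d => by rw [sub_neg_eq_add])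
      have t1 : HasSum (fun d : ℤ => (d:ℝ) * μ (b+1) (d + 1)) (-1) := by
        have g1 : HasSum (fun d : ℤ => ((d:ℝ) - 1) * μ (b+1) d) (-1) := by
          have h := n1.sub n0
          rw [show (0:ℝ) - 1 = -1 from by ring] at h
          exact h.congr_fn (fun d => by ring)
        exact (hasSum_comp_sub _ (-1) _ g1).congr_fn
          (fun d => by rw [sub_neg_eq_add]; push_cast; ring)
      have t2 : HasSum (fun d : ℤ => (d:ℝ)^2 * μ (b+1) (d + 1)) (V (b+1) + 1) := by
        have g2 : HasSum (fun d : ℤ => ((d:ℝ) - 1)^2 * μ (b+1) d) (V (b+1) + 1) := by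
          have h := (n2.sub (n1.mul_left 2)).add n0
          rw [show V (b+1) - 2 * (0:ℝ) + 1 = V (b+1) + 1 from by ring] at h
          exact h.congr_fn (fun d => by ring)
        exact (hasSum_comp_sub _ (-1) _ g2).congr_fn
          (fun d => by rw [sub_neg_eq_add]; push_cast; ring)
      refine ⟨?_, ?_, ?_⟩
      · have h := (sb0.add t0).div_const 2
        rw [show ((1:ℝ) + 1)/2 = 1 from by norm_num] at h
        exact h.congr_fn (fun d => (he d).symm)
      · have h := (sb1.add t1).div_const 2
        rw [show ((1:ℝ) + -1)/2 = 0 from by norm_num] at h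
        exact h.congr_fn (fun d => by rw [he d]; ring)
      · have h := (sb2.add t2).div_const 2
        rw [show ((V b + 1) + (V (b+1) + 1))/2 = (V b + V (b+1))/2 + 1 from by ring] at h
        rw [V_odd]
        exact h.congr_fn (fun d => by rw [he d]; ring)

end Mu2

def aseq (A : ℕ → ℕ) (n j : ℕ) : ℕ := ∑ k ∈ Ico j (n+1), A k * 2^(k-j)

noncomputable def Wf (b : ℕ → ℝ) (n j : ℕ) : ℝ :=
  2*(1/2:ℝ)^(n+1-j) - ∑ m ∈ Icc j n, b m * (1/2:ℝ)^(m-j)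

noncomputable def Uf (A : ℕ → ℕ) (b : ℕ → ℝ) (n j : ℕ) : ℝ :=
  ∑ i ∈ Ico j (n+1), (A i:ℝ) * (Wf b n i + b i + 1)

lemma aseq_step (A : ℕ → ℕ) (n j : ℕ) (hj : j ≤ n) :
    aseq A n j = 2 * aseq A n (j+1) + A j := by
  unfold aseq
  rw [Finset.sum_eq_sum_Ico_succ_bot (by omega)]
  rw [Finset.mul_sum]
  have hc : ∀ k ∈ Ico (j+1) (n+1), A k * 2^(k-j) = 2 * (A k * 2^(k-(j+1))) := by
    intro k hk
    simp only [Finset.mem_Ico] at hk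
    rw [show k - j = (k - (j+1)) + 1 from by omega, pow_succ]
    ring
  rw [Finset.sum_congr rfl hc]
  simp
  ring

lemma Wf_step (b : ℕ → ℝ) (n j : ℕ) (hj : j ≤ n) :
    Wf b n j = Wf b n (j+1) / 2 - b j := by
  unfold Wf
  rw [show Icc j n = Ico j (n+1) from (Finset.Ico_add_one_right_eq_Icc j n).symm,
    Finset.sum_eq_sum_Ico_succ_bot (by omega), Nat.sub_self, pow_zero, mul_one]
  have hc : ∀ m ∈ Ico (j+1) (n+1), b m * (1/2:ℝ)^(m-j) = (b m * (1/2:ℝ)^(m-(j+1))) / 2 := by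
    intro m hm
    simp only [Finset.mem_Ico] at hm
    rw [show m - j = (m - (j+1)) + 1 from by omega, pow_succ]
    ring
  rw [Finset.sum_congr rfl hc, ← Finset.sum_div]
  rw [show n + 1 - j = (n + 1 - (j+1)) + 1 from by omega, pow_succ]
  rw [show Icc (j+1) n = Ico (j+1) (n+1) from (Finset.Ico_add_one_right_eq_Icc _ _).symm]
  ring

lemma Uf_step (A : ℕ → ℕ) (b : ℕ → ℝ) (n j : ℕ) (hj : j ≤ n) :
    Uf A b n j = (A j : ℝ) * (Wf b n j + b j + 1) + Uf A b n (j+1) := by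
  unfold Uf
  rw [Finset.sum_eq_sum_Ico_succ_bot (by omega)]

lemma V_eq_Uf (n : ℕ) (A : ℕ → ℕ) (hA : ∀ k, A k = 0 ∨ A k = 1) (b : ℕ → ℝ)
    (hb : ∀ j, b j = 2 * (A j : ℝ) - 1) :
    V (aseq A n 0) = Uf A b n 0 := by
  have key : ∀ t, t ≤ n + 1 →
      V (aseq A n (n+1-t)) = Uf A b n (n+1-t) ∧
      V (aseq A n (n+1-t) + 1) = Uf A b n (n+1-t) + Wf b n (n+1-t) := by
    intro t
    induction t with
    | zero =>
      intro _
      have h1 : aseq A n (n+1) = 0 := by simp [aseq]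
      have h2 : Uf A b n (n+1) = 0 := by simp [Uf]
      have h3 : Wf b n (n+1) = 2 := by
        unfold Wf
        rw [show Icc (n+1) n = ∅ from Finset.Icc_eq_empty (by omega)]
        simp
      simp only [Nat.sub_zero]
      rw [h1, h2, h3, V_zero, V_one]
      norm_num
    | succ t iht =>
      intro ht
      have ht' : t ≤ n + 1 := by omega
      obtain ⟨ih1, ih2⟩ := iht ht'
      set j := n + 1 - (t+1) with hjdef
      have hj : j ≤ n := by omega
      have hj1 : n + 1 - t = j + 1 := by omega
      rw [hj1] at ih1 ih2
      have hstep := aseq_step A n j hj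
      have hW := Wf_step b n j hj
      have hU := Uf_step A b n j hj
      rcases hA j with h0 | h1
      · have hbj : b j = -1 := by rw [hb j, h0]; norm_num
        have ha : aseq A n j = 2 * aseq A n (j+1) := by omega
        constructor
        · rw [ha, V_even, ih1, hU, h0]
          norm_num
        · rw [ha, show 2 * aseq A n (j+1) + 1 = 2 * aseq A n (j+1) + 1 from rfl, V_odd,
            ih1, ih2, hU, h0, hW, hbj]
          push_cast
          ring
      · have hbj : b j = 1 := by rw [hb j, h1]; norm_num
        have ha : aseq A n j = 2 * aseq A n (j+1) + 1 := by omega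
        constructor
        · rw [ha, V_odd, ih1, ih2, hU, h1, hW, hbj]
          push_cast
          ring
        · have ha2 : aseq A n j + 1 = 2 * (aseq A n (j+1) + 1) := by omega
          rw [ha2, V_even, ih2, hU, h1, hW, hbj]
          push_cast
          ring
  have := (key (n+1) le_rfl).1
  simpa using this

lemma swap_Sd (n : ℕ) (b : ℕ → ℝ) :
    ∑ t ∈ range (n+1), ∑ m ∈ Icc (t+1) n, (b t * b m * (1/2:ℝ)^(m-t))
    = ∑ i ∈ Icc 1 n, ∑ k ∈ range (n-i+1), (b (k+i) * b k * (1/2:ℝ)^i) := by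
  rw [Finset.sum_sigma', Finset.sum_sigma']
  refine Finset.sum_nbij' (fun p => ⟨p.2 - p.1, p.1⟩) (fun p => ⟨p.2, p.2 + p.1⟩)
    ?_ ?_ ?_ ?_ ?_
  · rintro ⟨t, m⟩ h
    simp only [Finset.mem_sigma, Finset.mem_range, Finset.mem_Icc] at h ⊢
    omega
  · rintro ⟨i, k⟩ h
    simp only [Finset.mem_sigma, Finset.mem_range, Finset.mem_Icc] at h ⊢
    omega
  · rintro ⟨t, m⟩ h
    simp only [Finset.mem_sigma, Finset.mem_range, Finset.mem_Icc] at h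
    show (⟨t, t + (m - t)⟩ : Σ _ : ℕ, ℕ) = ⟨t, m⟩
    rw [show t + (m - t) = m from by omega]
  · rintro ⟨i, k⟩ h
    simp only [Finset.mem_sigma, Finset.mem_range, Finset.mem_Icc] at h
    show (⟨k + i - k, k⟩ : Σ _ : ℕ, ℕ) = ⟨i, k⟩
    rw [show k + i - k = i from by omega]
  · rintro ⟨t, m⟩ h
    simp only [Finset.mem_sigma, Finset.mem_range, Finset.mem_Icc] at h
    show b t * b m * (1/2:ℝ)^(m-t) = b (t + (m - t)) * b t * (1/2:ℝ)^(m-t)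
    rw [show t + (m - t) = m from by omega]
    ring

lemma Sd_eq (n : ℕ) (b : ℕ → ℝ) (hbsq : ∀ j, b j * b j = 1) :
    ∑ t ∈ range (n+1), ∑ m ∈ Icc t n, (b t * b m * (1/2:ℝ)^(m-t))
    = ((n:ℝ)+1) + ∑ i ∈ Icc 1 n, ∑ k ∈ range (n-i+1), (b (k+i) * b k * (1/2:ℝ)^i) := by
  have hsplit : ∀ t ∈ range (n+1), ∑ m ∈ Icc t n, (b t * b m * (1/2:ℝ)^(m-t))
      = 1 + ∑ m ∈ Icc (t+1) n, (b t * b m * (1/2:ℝ)^(m-t)) := by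
    intro t ht
    simp only [mem_range] at ht
    rw [show Icc t n = Ico t (n+1) from (Finset.Ico_add_one_right_eq_Icc _ _).symm,
      Finset.sum_eq_sum_Ico_succ_bot (by omega), Nat.sub_self, pow_zero, mul_one, hbsq t,
      show Ico (t+1) (n+1) = Icc (t+1) n from Finset.Ico_add_one_right_eq_Icc _ _]
  rw [Finset.sum_congr rfl hsplit, Finset.sum_add_distrib, Finset.sum_const, card_range,
    swap_Sd]
  push_cast
  ring

lemma swap_Se (n : ℕ) (b : ℕ → ℝ) :
    ∑ t ∈ range (n+1), ∑ m ∈ Icc t n, (b m * (1/2:ℝ)^(m-t))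
    = ∑ m ∈ range (n+1), ∑ t ∈ range (m+1), (b m * (1/2:ℝ)^(m-t)) := by
  rw [Finset.sum_sigma', Finset.sum_sigma']
  refine Finset.sum_nbij' (fun p => ⟨p.2, p.1⟩) (fun p => ⟨p.2, p.1⟩) ?_ ?_ ?_ ?_ ?_
  · rintro ⟨t, m⟩ h
    simp only [Finset.mem_sigma, Finset.mem_range, Finset.mem_Icc] at h ⊢
    omega
  · rintro ⟨m, t⟩ h
    simp only [Finset.mem_sigma, Finset.mem_range, Finset.mem_Icc] at h ⊢
    omega
  · rintro ⟨t, m⟩ _; rfl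
  · rintro ⟨m, t⟩ _; rfl
  · rintro ⟨t, m⟩ _; rfl

lemma Se_eq (n : ℕ) (b : ℕ → ℝ) :
    ∑ t ∈ range (n+1), ∑ m ∈ Icc t n, (b m * (1/2:ℝ)^(m-t))
    = 2 * (∑ m ∈ range (n+1), b m) - 2 * ∑ m ∈ range (n+1), (b m * (1/2:ℝ)^(m+1)) := by
  rw [swap_Se]
  have hinner : ∀ m ∈ range (n+1), ∑ t ∈ range (m+1), (b m * (1/2:ℝ)^(m-t))
      = 2 * b m - 2 * (b m * (1/2:ℝ)^(m+1)) := by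
    intro m _
    rw [← Finset.mul_sum]
    have hr : ∑ t ∈ range (m+1), ((1/2:ℝ))^(m-t) = ∑ j ∈ range (m+1), ((1/2:ℝ))^j := by
      have := Finset.sum_range_reflect (fun j => ((1/2:ℝ))^j) (m+1)
      simpa using this
    rw [hr, geom_sum_eq (by norm_num : (1/2:ℝ) ≠ 1)]
    rw [pow_succ]
    field_simp
    ring
  rw [Finset.sum_congr rfl hinner, Finset.sum_sub_distrib, ← Finset.mul_sum, ← Finset.mul_sum]

lemma reflect_b (n : ℕ) (b : ℕ → ℝ) :
    ∑ t ∈ range (n+1), (b t * (1/2:ℝ)^(n+1-t))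
    = ∑ k ∈ range (n+1), (b (n-k) * (1/2:ℝ)^(k+1)) := by
  rw [← Finset.sum_range_reflect (fun t => b t * (1/2:ℝ)^(n+1-t)) (n+1)]
  refine Finset.sum_congr rfl fun k hk => ?_
  simp only [mem_range] at hk
  simp only [Nat.add_sub_cancel]
  rw [show n + 1 - (n - k) = k + 1 from by omega]

lemma pow_sum_reflect (n : ℕ) :
    ∑ t ∈ range (n+1), ((1/2:ℝ))^(n+1-t) = 1 - (1/2:ℝ)^(n+1) := by
  rw [← Finset.sum_range_reflect (fun t => ((1/2:ℝ))^(n+1-t)) (n+1)]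
  have hc : ∀ k ∈ range (n+1), ((1/2:ℝ))^(n+1-(n-(k:ℕ))) = (1/2:ℝ) * ((1/2:ℝ))^k := by
    intro k hk
    simp only [mem_range] at hk
    rw [show n + 1 - (n - k) = k + 1 from by omega, pow_succ]
    ring
  calc ∑ k ∈ range (n+1), ((1/2:ℝ))^(n+1-(n+1-1-k))
      = ∑ k ∈ range (n+1), (1/2:ℝ) * ((1/2:ℝ))^k := by
        refine Finset.sum_congr rfl fun k hk => ?_
        simp only [Nat.add_sub_cancel]
        exact hc k hk
    _ = 1 - (1/2:ℝ)^(n+1) := by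
        rw [← Finset.mul_sum, geom_sum_eq (by norm_num : (1/2:ℝ) ≠ 1), pow_succ]
        field_simp
        ring

lemma Uf_eq (n : ℕ) (A : ℕ → ℕ) (hA : ∀ k, A k = 0 ∨ A k = 1) (b : ℕ → ℝ)
    (hb : ∀ j, b j = 2 * (A j : ℝ) - 1) :
    Uf A b n 0 = ((n : ℝ) + 3) / 2 - 1 / 2 ^ (n + 1)
        - (1 / 2) * ∑ i ∈ Icc 1 n, ∑ k ∈ range (n - i + 1), b (k + i) * b k / 2 ^ i
        + ∑ k ∈ range (n + 1), (b k + b (n - k)) / 2 ^ (k + 1) := by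
  have hbsq : ∀ j, b j * b j = 1 := by
    intro j
    rcases hA j with h | h <;> rw [hb j, h] <;> norm_num
  have hA' : ∀ t, (A t : ℝ) = (b t + 1) / 2 := by
    intro t
    rw [hb t]; ring
  -- termwise expansion
  have step1 : Uf A b n 0 =
      (∑ t ∈ range (n+1), ((b t + 1) * ((1/2:ℝ)^(n+1-t) + 1)))
      - (1/2) * (∑ t ∈ range (n+1), ∑ m ∈ Icc t n, (b t * b m * (1/2:ℝ)^(m-t)))
      - (1/2) * (∑ t ∈ range (n+1), ∑ m ∈ Icc t n, (b m * (1/2:ℝ)^(m-t))) := by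
    unfold Uf Wf
    rw [show Ico 0 (n+1) = range (n+1) from by rw [Finset.range_eq_Ico]]
    rw [Finset.mul_sum, Finset.mul_sum, ← Finset.sum_sub_distrib, ← Finset.sum_sub_distrib]
    refine Finset.sum_congr rfl fun t ht => ?_
    have hS : ∑ m ∈ Icc t n, (b t * b m * (1/2:ℝ)^(m-t))
        = b t * ∑ m ∈ Icc t n, (b m * (1/2:ℝ)^(m-t)) := by
      rw [Finset.mul_sum]
      exact Finset.sum_congr rfl fun m _ => by ring
    rw [hS, hA' t]
    linear_combination (1/2:ℝ) * hbsq t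
  -- expand the first sum
  have step2 : ∑ t ∈ range (n+1), ((b t + 1) * ((1/2:ℝ)^(n+1-t) + 1))
      = (∑ k ∈ range (n+1), (b (n-k) * (1/2:ℝ)^(k+1))) + (1 - (1/2:ℝ)^(n+1))
        + (∑ t ∈ range (n+1), b t) + ((n:ℝ)+1) := by
    have hterm : ∀ t ∈ range (n+1), (b t + 1) * ((1/2:ℝ)^(n+1-t) + 1)
        = (b t * (1/2:ℝ)^(n+1-t)) + ((1/2:ℝ)^(n+1-t)) + (b t + 1) := by
      intro t _; ring
    rw [Finset.sum_congr rfl hterm, Finset.sum_add_distrib, Finset.sum_add_distrib,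
      Finset.sum_add_distrib, reflect_b, pow_sum_reflect, Finset.sum_const, card_range]
    push_cast
    ring
  -- convert target divisions
  have t1 : ∑ i ∈ Icc 1 n, ∑ k ∈ range (n - i + 1), b (k + i) * b k / 2 ^ i
      = ∑ i ∈ Icc 1 n, ∑ k ∈ range (n - i + 1), (b (k + i) * b k * (1/2:ℝ)^i) := by
    refine Finset.sum_congr rfl fun i _ => Finset.sum_congr rfl fun k _ => ?_
    rw [one_div_pow, mul_one_div]
  have t2 : ∑ k ∈ range (n + 1), (b k + b (n - k)) / 2 ^ (k + 1)
      = (∑ k ∈ range (n+1), (b k * (1/2:ℝ)^(k+1)))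
        + ∑ k ∈ range (n+1), (b (n-k) * (1/2:ℝ)^(k+1)) := by
    rw [← Finset.sum_add_distrib]
    refine Finset.sum_congr rfl fun k _ => ?_
    rw [one_div_pow]
    field_simp
  have hSd := Sd_eq n b hbsq
  have hSe := Se_eq n b
  have h2pow : (1:ℝ) / 2 ^ (n+1) = (1/2:ℝ)^(n+1) := by rw [one_div_pow]
  rw [step1, step2, hSd, hSe, t1, t2, h2pow]
  ring

theorem variance_formula (μ : ℕ → ℤ → ℝ)
    (hμ : ∀ a d, Tendsto (densSeq a d) atTop (nhds (μ a d)))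
    (n : ℕ) (A : ℕ → ℕ) (hA : ∀ k, A k = 0 ∨ A k = 1) (hlead : A n = 1)
    (a : ℕ) (ha : a = ∑ k ∈ range (n + 1), A k * 2 ^ k)
    (b : ℕ → ℝ) (hb : ∀ j, b j = (-1 : ℝ) ^ (A j + 1)) :
    HasSum (fun d : ℤ => (d : ℝ) ^ 2 * μ a d)
      (((n : ℝ) + 3) / 2 - 1 / 2 ^ (n + 1)
        - (1 / 2) * ∑ i ∈ Icc 1 n, ∑ k ∈ range (n - i + 1), b (k + i) * b k / 2 ^ i
        + ∑ k ∈ range (n + 1), (b k + b (n - k)) / 2 ^ (k + 1)) := by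
  have hb' : ∀ j, b j = 2 * (A j : ℝ) - 1 := by
    intro j
    rcases hA j with h | h <;> rw [hb j, h] <;> norm_num
  have haseq : a = aseq A n 0 := by
    rw [ha]
    unfold aseq
    rw [← Finset.range_eq_Ico]
    exact Finset.sum_congr rfl fun k _ => by rw [Nat.sub_zero]
  have hVal : V a = ((n : ℝ) + 3) / 2 - 1 / 2 ^ (n + 1)
        - (1 / 2) * ∑ i ∈ Icc 1 n, ∑ k ∈ range (n - i + 1), b (k + i) * b k / 2 ^ i
        + ∑ k ∈ range (n + 1), (b k + b (n - k)) / 2 ^ (k + 1) := by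
    rw [haseq, V_eq_Uf n A hA b hb', Uf_eq n A hA b hb']
  have hV := (moments hμ a).2.2
  rw [hVal] at hV
  exact hV
end
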